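/- For every ζ ∈ [0, 1/2] there exist continuous functions F, H : 𝕋 → ℝ such that: (1) F(t)·F(t−ζ) = 0 for all t; (2) F(t)·[1 − H(t) − H(t−ζ)] = 0 for all t; (3) H(t)·(1 − H(t)) = F(t)² + F(t+ζ)² for all t; (4) ∫_𝕋 H = ζ; (5) 0 ≤ H(t) ≤ 1 for all t, and F vanishes on the image of [1/2, 1] in 𝕋. -/

import Mathlib

open MeasureTheory

noncomputable def rfun (ζ : ℝ) : ℝ → ℝ :=
  fun x => if x ≤ ζ then Real.sqrt (x / ζ * (1 - x / ζ)) else 0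

noncomputable def rhfun (ζ : ℝ) : ℝ → ℝ :=
  fun x => max 0 (1 - x / ζ) + max 0 ((x + ζ - 1) / ζ)

lemma rfun_cont {ζ : ℝ} (hz : 0 < ζ) : Continuous (rfun ζ) := by
  apply Continuous.if_le
  · exact (Real.continuous_sqrt.comp (by fun_prop))
  · exact continuous_const
  · exact continuous_id
  · exact continuous_const
  · intro x hx
    subst hx
    rw [div_self hz.ne']
    norm_num

lemma rhfun_cont (ζ : ℝ) : Continuous (rhfun ζ) := by
  unfold rhfun; fun_prop

lemma rfun_sq {ζ x : ℝ} (hz : 0 < ζ) (h0 : 0 ≤ x) (h1 : x ≤ ζ) :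
    rfun ζ x ^ 2 = x / ζ * (1 - x / ζ) := by
  rw [rfun, if_pos h1, Real.sq_sqrt]
  apply mul_nonneg (div_nonneg h0 hz.le)
  rw [sub_nonneg]
  exact div_le_one_of_le₀ h1 hz.le

lemma rfun_zero {ζ x : ℝ} (hz : 0 < ζ) (h : x = 0 ∨ ζ ≤ x) : rfun ζ x = 0 := by
  rcases h with h | h
  · subst h; rw [rfun, if_pos hz.le]; simp
  · rcases eq_or_lt_of_le h with h | h
    · rw [rfun, ← h, if_pos le_rfl, div_self hz.ne']
      norm_num
    · rw [rfun, if_neg (not_le.mpr h)]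

lemma rhfun_left {ζ x : ℝ} (hz : 0 < ζ) (hz2 : ζ ≤ 1 / 2) (h0 : 0 ≤ x) (h1 : x ≤ ζ) :
    rhfun ζ x = 1 - x / ζ := by
  rw [rhfun, max_eq_right, max_eq_left, add_zero]
  · apply div_nonpos_of_nonpos_of_nonneg _ hz.le
    linarith
  · rw [sub_nonneg]
    exact div_le_one_of_le₀ h1 hz.le

lemma rhfun_mid {ζ x : ℝ} (hz : 0 < ζ) (h0 : ζ ≤ x) (h1 : x ≤ 1 - ζ) :
    rhfun ζ x = 0 := by
  rw [rhfun, max_eq_left, max_eq_left, add_zero]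
  · apply div_nonpos_of_nonpos_of_nonneg _ hz.le
    linarith
  · rw [sub_nonpos]
    exact (one_le_div hz).mpr h0

lemma rhfun_right {ζ x : ℝ} (hz : 0 < ζ) (hz2 : ζ ≤ 1 / 2) (h0 : 1 - ζ ≤ x) (h1 : x ≤ 1) :
    rhfun ζ x = (x + ζ - 1) / ζ := by
  rw [rhfun, max_eq_left, max_eq_right, zero_add]
  · apply div_nonneg _ hz.le
    linarith
  · rw [sub_nonpos]
    apply (one_le_div hz).mpr
    linarith

lemma circle_rep (t : UnitAddCircle) :
    ∃ x : ℝ, x ∈ Set.Ico (0 : ℝ) 1 ∧ (x : UnitAddCircle) = t :=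
  ⟨(AddCircle.equivIco 1 0 t : ℝ), by simpa using (AddCircle.equivIco 1 0 t).2,
    (AddCircle.equivIco 1 0).symm_apply_apply t⟩

lemma coe_add_one (x : ℝ) : ((x + 1 : ℝ) : UnitAddCircle) = (x : UnitAddCircle) :=
  AddCircle.coe_add_period 1 x

lemma ucoe_add (x y : ℝ) :
    ((x + y : ℝ) : UnitAddCircle) = (x : UnitAddCircle) + (y : UnitAddCircle) := rfl

lemma ucoe_sub (x y : ℝ) :
    ((x - y : ℝ) : UnitAddCircle) = (x : UnitAddCircle) - (y : UnitAddCircle) := rfl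

/-- existence of Rieffel's functions F, H on the circle for any ζ ∈ [0,1/2]. -/
theorem stmt1 (ζ : ℝ) (hζ : ζ ∈ Set.Icc (0 : ℝ) (1 / 2)) :
    ∃ F H : C(UnitAddCircle, ℝ),
      (∀ t : UnitAddCircle, F t * F (t - (ζ : UnitAddCircle)) = 0) ∧
      (∀ t : UnitAddCircle, F t * (1 - H t - H (t - (ζ : UnitAddCircle))) = 0) ∧
      (∀ t : UnitAddCircle, H t * (1 - H t) = F t ^ 2 + F (t + (ζ : UnitAddCircle)) ^ 2) ∧
      (∫ t : UnitAddCircle, H t = ζ) ∧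
      (∀ t : UnitAddCircle, 0 ≤ H t ∧ H t ≤ 1) ∧
      (∀ s ∈ Set.Icc (1 / 2 : ℝ) 1, F (s : UnitAddCircle) = 0) := by
  obtain ⟨hζ0, hζ2⟩ := hζ
  rcases eq_or_lt_of_le hζ0 with h0 | hz
  · -- ζ = 0 : take F = 0, H = 0
    refine ⟨0, 0, ?_, ?_, ?_, ?_, ?_, ?_⟩ <;> simp [← h0]
  -- main case 0 < ζ
  have hζ1 : ζ < 1 := by linarith
  have hf01 : rfun ζ 0 = rfun ζ (0 + 1) := by
    rw [rfun_zero hz (Or.inl rfl), rfun_zero hz (Or.inr (by linarith))]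
  have hh01 : rhfun ζ 0 = rhfun ζ (0 + 1) := by
    rw [rhfun_left hz hζ2 le_rfl hz.le, rhfun_right hz hζ2 (by linarith) (by norm_num)]
    field_simp
    ring
  set F : C(UnitAddCircle, ℝ) :=
    ⟨AddCircle.liftIco 1 0 (rfun ζ),
      AddCircle.liftIco_continuous hf01 (rfun_cont hz).continuousOn⟩ with hF
  set H : C(UnitAddCircle, ℝ) :=
    ⟨AddCircle.liftIco 1 0 (rhfun ζ),
      AddCircle.liftIco_continuous hh01 (rhfun_cont ζ).continuousOn⟩ with hH
  have hFc : ∀ x : ℝ, x ∈ Set.Ico (0 : ℝ) 1 → F (x : UnitAddCircle) = rfun ζ x := by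
    intro x hx
    rw [hF]
    simp only [ContinuousMap.coe_mk]
    exact AddCircle.liftIco_zero_coe_apply hx
  have hHc : ∀ x : ℝ, x ∈ Set.Ico (0 : ℝ) 1 → H (x : UnitAddCircle) = rhfun ζ x := by
    intro x hx
    rw [hH]
    simp only [ContinuousMap.coe_mk]
    exact AddCircle.liftIco_zero_coe_apply hx
  have hc10 : ((1 : ℝ) : UnitAddCircle) = ((0 : ℝ) : UnitAddCircle) := by
    rw [← coe_add_one 0]; norm_num
  refine ⟨F, H, ?_, ?_, ?_, ?_, ?_, ?_⟩
  · -- F t * F (t - ζ) = 0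
    intro t
    obtain ⟨x, ⟨hx0, hx1⟩, rfl⟩ := circle_rep t
    rcases le_or_gt x ζ with hxz | hxz
    · rcases eq_or_lt_of_le hx0 with h | h
      · rw [hFc x ⟨hx0, hx1⟩, rfun_zero hz (Or.inl h.symm), zero_mul]
      rcases eq_or_lt_of_le hxz with h' | h'
      · rw [hFc x ⟨hx0, hx1⟩, rfun_zero hz (Or.inr h'.ge), zero_mul]
      -- 0 < x < ζ; representative of x - ζ is x - ζ + 1 ∈ [1-ζ, 1)
      have key : ((x : UnitAddCircle) - (ζ : UnitAddCircle))
          = ((x - ζ + 1 : ℝ) : UnitAddCircle) := by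
        rw [coe_add_one, ucoe_sub]
      rw [key, hFc (x - ζ + 1) ⟨by linarith, by linarith⟩,
        rfun_zero hz (Or.inr (by linarith)), mul_zero]
    · rw [hFc x ⟨hx0, hx1⟩, rfun_zero hz (Or.inr hxz.le), zero_mul]
  · -- F t * (1 - H t - H (t - ζ)) = 0
    intro t
    obtain ⟨x, ⟨hx0, hx1⟩, rfl⟩ := circle_rep t
    rcases le_or_gt x ζ with hxz | hxz
    · rcases eq_or_lt_of_le hx0 with h | h
      · rw [hFc x ⟨hx0, hx1⟩, rfun_zero hz (Or.inl h.symm), zero_mul]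
      rcases eq_or_lt_of_le hxz with h' | h'
      · rw [hFc x ⟨hx0, hx1⟩, rfun_zero hz (Or.inr h'.ge), zero_mul]
      have key : ((x : UnitAddCircle) - (ζ : UnitAddCircle))
          = ((x - ζ + 1 : ℝ) : UnitAddCircle) := by
        rw [coe_add_one, ucoe_sub]
      rw [key, hHc x ⟨hx0, hx1⟩, hHc (x - ζ + 1) ⟨by linarith, by linarith⟩,
        rhfun_left hz hζ2 hx0 hxz, rhfun_right hz hζ2 (by linarith) (by linarith)]
      have key2 : (1 : ℝ) - (1 - x / ζ) - (x - ζ + 1 + ζ - 1) / ζ = 0 := by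
        field_simp
        ring
      rw [key2, mul_zero]
    · rw [hFc x ⟨hx0, hx1⟩, rfun_zero hz (Or.inr hxz.le), zero_mul]
  · -- H t * (1 - H t) = F t ^ 2 + F (t + ζ) ^ 2
    intro t
    obtain ⟨x, ⟨hx0, hx1⟩, rfl⟩ := circle_rep t
    rcases le_or_gt x ζ with hxz | hxz
    · -- x ∈ [0, ζ]
      rw [hHc x ⟨hx0, hx1⟩, hFc x ⟨hx0, hx1⟩, rhfun_left hz hζ2 hx0 hxz,
        rfun_sq hz hx0 hxz]
      rcases lt_or_ge (x + ζ) 1 with h | h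
      · have key : ((x : UnitAddCircle) + (ζ : UnitAddCircle))
            = ((x + ζ : ℝ) : UnitAddCircle) := (ucoe_add x ζ).symm
        rw [key, hFc (x + ζ) ⟨by linarith, h⟩, rfun_zero hz (Or.inr (by linarith))]
        ring
      · have hsum : x + ζ = 1 := le_antisymm (by linarith) h
        have key : ((x : UnitAddCircle) + (ζ : UnitAddCircle))
            = ((0 : ℝ) : UnitAddCircle) := by
          rw [← ucoe_add, hsum, hc10]
        rw [key, hFc 0 ⟨le_rfl, one_pos⟩, rfun_zero hz (Or.inl rfl)]
        ring
    · rcases le_or_gt x (1 - ζ) with hx2 | hx2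
      · -- x ∈ (ζ, 1-ζ]
        rw [hHc x ⟨hx0, hx1⟩, hFc x ⟨hx0, hx1⟩, rhfun_mid hz hxz.le hx2,
          rfun_zero hz (Or.inr hxz.le)]
        rcases eq_or_lt_of_le hx2 with h | h
        · have hsum : x + ζ = 1 := by rw [h]; ring
          have key : ((x : UnitAddCircle) + (ζ : UnitAddCircle))
              = ((0 : ℝ) : UnitAddCircle) := by
            rw [← ucoe_add, hsum, hc10]
          rw [key, hFc 0 ⟨le_rfl, one_pos⟩, rfun_zero hz (Or.inl rfl)]
          ring
        · have key : ((x : UnitAddCircle) + (ζ : UnitAddCircle))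
              = ((x + ζ : ℝ) : UnitAddCircle) := (ucoe_add x ζ).symm
          rw [key, hFc (x + ζ) ⟨by linarith, by linarith⟩,
            rfun_zero hz (Or.inr (by linarith))]
          ring
      · -- x ∈ (1-ζ, 1) ; x + ζ - 1 ∈ (0, ζ)
        have key : ((x : UnitAddCircle) + (ζ : UnitAddCircle))
            = ((x + ζ - 1 : ℝ) : UnitAddCircle) := by
          rw [show (x + ζ - 1 : ℝ) = (x + ζ) - 1 by ring]
          rw [show ((x + ζ - 1 : ℝ) : UnitAddCircle) = ((x + ζ - 1 + 1 : ℝ) : UnitAddCircle) from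
            (coe_add_one _).symm]
          rw [show (x + ζ - 1 + 1 : ℝ) = x + ζ by ring, ucoe_add]
        rw [key, hHc x ⟨hx0, hx1⟩, hFc x ⟨hx0, hx1⟩,
          hFc (x + ζ - 1) ⟨by linarith, by linarith⟩,
          rhfun_right hz hζ2 hx2.le hx1.le, rfun_zero hz (Or.inr (by linarith)),
          rfun_sq hz (by linarith) (by linarith)]
        ring
  · -- integral
    rw [← UnitAddCircle.intervalIntegral_preimage 0 (fun t => H t), zero_add]
    have hcong : ∀ x ∈ Set.uIcc (0 : ℝ) 1, H (x : UnitAddCircle) = rhfun ζ x := by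
      intro x hx
      rw [Set.uIcc_of_le (by norm_num : (0:ℝ) ≤ 1)] at hx
      rcases eq_or_lt_of_le hx.2 with h | h
      · subst h
        rw [hc10, hHc 0 ⟨le_rfl, one_pos⟩, rhfun_left hz hζ2 le_rfl hz.le,
          rhfun_right hz hζ2 (by linarith) le_rfl]
        field_simp
        ring
      · exact hHc x ⟨hx.1, h⟩
    rw [intervalIntegral.integral_congr hcong]
    have hint : ∀ a b : ℝ, IntervalIntegrable (rhfun ζ) volume a b :=
      fun a b => (rhfun_cont ζ).intervalIntegrable a b
    rw [← intervalIntegral.integral_add_adjacent_intervals (hint 0 ζ) (hint ζ 1),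
      ← intervalIntegral.integral_add_adjacent_intervals (hint ζ (1 - ζ)) (hint (1-ζ) 1)]
    have e1 : ∫ x in (0:ℝ)..ζ, rhfun ζ x = ∫ x in (0:ℝ)..ζ, (1 - x / ζ) := by
      apply intervalIntegral.integral_congr
      intro x hx
      rw [Set.uIcc_of_le hz.le] at hx
      exact rhfun_left hz hζ2 hx.1 hx.2
    have e2 : ∫ x in ζ..(1 - ζ), rhfun ζ x = 0 := by
      rw [intervalIntegral.integral_congr (g := fun _ => (0:ℝ)) ?_, intervalIntegral.integral_zero]
      intro x hx
      rw [Set.uIcc_of_le (by linarith : ζ ≤ 1 - ζ)] at hx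
      exact rhfun_mid hz hx.1 hx.2
    have e3 : ∫ x in (1 - ζ)..1, rhfun ζ x = ∫ x in (1 - ζ)..1, ((x + ζ - 1) / ζ) := by
      apply intervalIntegral.integral_congr
      intro x hx
      rw [Set.uIcc_of_le (by linarith : (1:ℝ) - ζ ≤ 1)] at hx
      exact rhfun_right hz hζ2 hx.1 hx.2
    rw [e1, e2, e3]
    have i1 : ∫ x in (0:ℝ)..ζ, (1 - x / ζ) = ζ - (ζ^2 - 0^2)/2/ζ := by
      rw [intervalIntegral.integral_sub intervalIntegrable_const
          ((by fun_prop : Continuous fun x : ℝ => x / ζ).intervalIntegrable _ _),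
        intervalIntegral.integral_div, integral_id, intervalIntegral.integral_const,
        smul_eq_mul, mul_one, sub_zero]
    have i3 : ∫ x in (1 - ζ)..1, ((x + ζ - 1) / ζ)
        = ((1^2 - (1-ζ)^2)/2 + (1 - (1 - ζ)) * (ζ - 1)) / ζ := by
      rw [intervalIntegral.integral_div]
      congr 1
      rw [show (fun x : ℝ => x + ζ - 1) = fun x : ℝ => x + (ζ - 1) from funext fun x => by ring]
      rw [intervalIntegral.integral_add ((by fun_prop : Continuous fun x : ℝ => x).intervalIntegrable _ _)
          intervalIntegrable_const,
        integral_id, intervalIntegral.integral_const, smul_eq_mul]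
    rw [i1, i3]
    field_simp
    ring
  · -- 0 ≤ H ≤ 1
    intro t
    obtain ⟨x, ⟨hx0, hx1⟩, rfl⟩ := circle_rep t
    rw [hHc x ⟨hx0, hx1⟩]
    constructor
    · exact add_nonneg (le_max_left _ _) (le_max_left _ _)
    · rcases le_or_gt x ζ with h | h
      · rw [rhfun_left hz hζ2 hx0 h]
        have : 0 ≤ x / ζ := div_nonneg hx0 hz.le
        linarith
      rcases le_or_gt x (1 - ζ) with h' | h'
      · rw [rhfun_mid hz h.le h']; norm_num
      · rw [rhfun_right hz hζ2 h'.le hx1.le]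
        apply div_le_one_of_le₀ (by linarith) hz.le
  · -- F vanishes on [1/2, 1]
    intro s hs
    rcases eq_or_lt_of_le hs.2 with h | h
    · subst h
      rw [hc10, hFc 0 ⟨le_rfl, one_pos⟩]
      exact rfun_zero hz (Or.inl rfl)
    · rw [hFc s ⟨by linarith [hs.1], h⟩]
      exact rfun_zero hz (Or.inr (by linarith [hs.1]))
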